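/- Let L be any string of length n over a linearly ordered alphabet, let F be the string obtained by sorting the characters of L in nondecreasing order, and let LF be the last-to-first map of L. Then F[LF(i)] = L[i] for every 0 ≤ i < n. -/

import Mathlib

/-- The last-to-first map of a string `L` of length `n`:
`LF(i) = |{ j : L[j] < L[i] }| + |{ j < i : L[j] = L[i] }|` (0-based positions). -/
def lfMap {α : Type*} [LinearOrder α] (L : List α) (i : Fin L.length) : ℕ :=
  (Finset.univ.filter fun j : Fin L.length => L.get j < L.get i).card +
  (Finset.univ.filter fun j : Fin L.length => (j : ℕ) < (i : ℕ) ∧ L.get j = L.get i).card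

lemma card_filter_get {α : Type*} (L : List α) (p : α → Prop) [DecidablePred p] :
    (Finset.univ.filter fun j : Fin L.length => p (L.get j)).card
      = L.countP fun a => p a := by
  classical
  have h : (Finset.univ.filter fun j : Fin L.length => p (L.get j)).card
      = ((List.finRange L.length).filter fun j => decide (p (L.get j))).length := by
    rw [Finset.card, Finset.filter_val, Fin.univ_def]
    simp [Multiset.filter_coe]
  rw [h, ← List.countP_eq_length_filter]
  conv_rhs => rw [← List.map_get_finRange L]
  rw [List.countP_map]
  rfl

lemma sorted_get_iff {α : Type*} [LinearOrder α] {S : List α} (hS : S.Pairwise (· ≤ ·))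
    {p : α → Prop} [DecidablePred p] (hp : ∀ a b : α, a ≤ b → p b → p a)
    (k : ℕ) (hk : k < S.length) :
    p S[k] ↔ k < S.countP fun a => p a := by
  constructor
  · intro h
    have htake : (S.take (k+1)).countP (fun a => decide (p a)) = (S.take (k+1)).length := by
      rw [List.countP_eq_length]
      intro a ha
      obtain ⟨j, hj, rfl⟩ := List.mem_iff_getElem.1 ha
      rw [List.getElem_take]
      have hjk : j ≤ k := by
        have := hj; simp [List.length_take] at this; omega
      simp only [decide_eq_true_eq]
      exact hp _ _ (hS.rel_get_of_le (show (⟨j, by omega⟩ : Fin S.length) ≤ ⟨k, hk⟩ from hjk)) h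
    have hsplit : S.countP (fun a => decide (p a))
        = (S.take (k+1)).countP (fun a => decide (p a))
          + (S.drop (k+1)).countP (fun a => decide (p a)) := by
      conv_lhs => rw [← List.take_append_drop (k+1) S]
      rw [List.countP_append]
    have : (S.take (k+1)).length = k+1 := by simp [List.length_take]; omega
    simp only [List.countP] at *
    omega
  · intro h
    by_contra hnp
    have hdrop : (S.drop k).countP (fun a => decide (p a)) = 0 := by
      rw [List.countP_eq_zero]
      intro a ha
      obtain ⟨j, hj, rfl⟩ := List.mem_iff_getElem.1 ha
      rw [List.getElem_drop]
      have hle : (⟨k, hk⟩ : Fin S.length) ≤ ⟨k + j, by simp [List.length_drop] at hj; omega⟩ :=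
        Fin.mk_le_mk.2 (Nat.le_add_right _ _)
      intro hpj
      exact hnp (hp _ _ (hS.rel_get_of_le hle) (by simpa using hpj))
    have hsplit : S.countP (fun a => decide (p a))
        = (S.take k).countP (fun a => decide (p a))
          + (S.drop k).countP (fun a => decide (p a)) := by
      conv_lhs => rw [← List.take_append_drop k S]
      rw [List.countP_append]
    have hle := List.countP_le_length (p := fun a => decide (p a)) (l := S.take k)
    have : (S.take k).length ≤ k := by simp [List.length_take]
    simp only [List.countP] at *
    omega

lemma countP_le_split {α : Type*} [LinearOrder α] (x : α) (L : List α) :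
    (L.countP fun a => a ≤ x) = (L.countP fun a => a < x) + (L.countP fun a => a = x) := by
  induction L with
  | nil => simp
  | cons a t ih =>
    simp only [List.countP_cons, ih]
    rcases lt_trichotomy a x with h | h | h
    · simp [h, h.le, h.ne]; omega
    · simp [h]; omega
    · simp [h.ne', not_le.2 h, not_lt.2 h.le]

/-- if `F` is the string obtained by sorting the characters of `L`
in nondecreasing order, then `F[LF(i)] = L[i]` for every position `i` of `L`. -/
theorem sorted_at_lf {α : Type*} [LinearOrder α] (L : List α) (i : Fin L.length) :
    (Multiset.sort (L : Multiset α) (· ≤ ·))[lfMap L i]? = some (L.get i) := by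
  set x := L.get i with hx
  set S := Multiset.sort (L : Multiset α) (· ≤ ·) with hSdef
  have hS : S.Pairwise (· ≤ ·) := Multiset.pairwise_sort _ _
  have hperm : S.Perm L := by
    rw [← Multiset.coe_eq_coe, Multiset.sort_eq]
  set a := L.countP fun c => c < x with ha
  set b := L.countP fun c => c = x with hb
  -- first summand of lfMap is a
  have h1 : (Finset.univ.filter fun j : Fin L.length => L.get j < L.get i).card = a :=
    card_filter_get L (fun c => c < x)
  -- second summand is < b
  have h2 : (Finset.univ.filter fun j : Fin L.length =>
      (j : ℕ) < (i : ℕ) ∧ L.get j = L.get i).card < b := by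
    have hb' : (Finset.univ.filter fun j : Fin L.length => L.get j = x).card = b :=
      card_filter_get L (fun c => c = x)
    rw [← hb']
    apply Finset.card_lt_card
    constructor
    · intro j hj
      simp only [Finset.mem_filter, Finset.mem_univ, true_and] at *
      exact hj.2
    · intro hsub
      have hi : i ∈ Finset.univ.filter fun j : Fin L.length => L.get j = x :=
        Finset.mem_filter.2 ⟨Finset.mem_univ _, rfl⟩
      have := (Finset.mem_filter.1 (hsub hi)).2.1
      exact absurd this (lt_irrefl _)
  have hkdef : lfMap L i = a + (Finset.univ.filter fun j : Fin L.length =>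
      (j : ℕ) < (i : ℕ) ∧ L.get j = L.get i).card := by
    rw [lfMap, h1]
  set k := lfMap L i with hk
  have hkab : a ≤ k ∧ k < a + b := by
    constructor
    · omega
    · omega
  -- transfer counts to S
  have hSlt : (S.countP fun c => c < x) = a := by rw [hperm.countP_eq]
  have hSle : (S.countP fun c => c ≤ x) = a + b := by
    rw [hperm.countP_eq, countP_le_split]
  have hklen : k < S.length := by
    have hl := List.countP_le_length (p := fun c => decide (c ≤ x)) (l := S)
    omega
  rw [List.getElem?_eq_getElem hklen]
  congr 1
  have hle : S[k] ≤ x := by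
    rw [sorted_get_iff hS (fun a b hab h => le_trans hab h) k hklen, hSle]
    omega
  have hnlt : ¬ S[k] < x := by
    rw [sorted_get_iff hS (fun a b hab h => lt_of_le_of_lt hab h) k hklen, hSlt]
    omega
  exact le_antisymm hle (not_lt.1 hnlt)
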